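/- Under Assumptions A1 and A2, if in addition range(T) = Λ (the trace operator is surjective), then range((I − X) T) is closed, and consequently ker(R^⊤) = { T^⊤ τ : τ ∈ Λ*, (I + X^⊤) τ = 0 } (without closure). -/

import Mathlib

/-- The transpose (dual map) `B^⊤ : Y* → X*` of a bounded linear operator `B : X → Y`. -/
noncomputable def trOp {X Y : Type*} [NormedAddCommGroup X] [NormedSpace ℂ X]
    [NormedAddCommGroup Y] [NormedSpace ℂ Y] (B : X →L[ℂ] Y) :
    (Y →L[ℂ] ℂ) →L[ℂ] (X →L[ℂ] ℂ) :=
  (ContinuousLinearMap.compL ℂ X Y ℂ).flip B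

lemma trOp_apply {X Y : Type*} [NormedAddCommGroup X] [NormedSpace ℂ X]
    [NormedAddCommGroup Y] [NormedSpace ℂ Y] (B : X →L[ℂ] Y) (f : Y →L[ℂ] ℂ) (x : X) :
    trOp B f x = f (B x) := rfl

/-- if additionally `range(T) = Λ`, then `range((I − X)T)` is closed and
`ker(R^⊤) = { T^⊤ τ : (I + X^⊤) τ = 0 }` (without closure). -/
theorem statement4
    {Uhat U Lam : Type*}
    [NormedAddCommGroup Uhat] [InnerProductSpace ℂ Uhat] [CompleteSpace Uhat]
    [NormedAddCommGroup U] [InnerProductSpace ℂ U] [CompleteSpace U]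
    [NormedAddCommGroup Lam] [InnerProductSpace ℂ Lam] [CompleteSpace Lam]
    (R : Uhat →L[ℂ] U) (T : U →L[ℂ] Lam) (X : Lam →L[ℂ] Lam)
    -- Assumption A1
    (hRinj : LinearMap.ker (R : Uhat →ₗ[ℂ] U) = ⊥)
    (hRclosed : IsClosed (Set.range R))
    -- Assumption A2
    (hX2 : X.comp X = ContinuousLinearMap.id ℂ Lam)
    (hA2 : LinearMap.range (R : Uhat →ₗ[ℂ] U) =
      LinearMap.ker (((ContinuousLinearMap.id ℂ Lam - X).comp T : U →L[ℂ] Lam) : U →ₗ[ℂ] Lam))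
    -- surjectivity of the trace operator
    (hTsurj : LinearMap.range (T : U →ₗ[ℂ] Lam) = ⊤) :
    IsClosed (Set.range fun u : U => T u - X (T u)) ∧
    ((LinearMap.ker (trOp R : (U →L[ℂ] ℂ) →ₗ[ℂ] (Uhat →L[ℂ] ℂ)) : Submodule ℂ (U →L[ℂ] ℂ)) :
      Set (U →L[ℂ] ℂ)) =
      ⇑(trOp T) '' {τ : Lam →L[ℂ] ℂ | τ + trOp X τ = 0} := by
  have hX2' : ∀ y : Lam, X (X y) = y := by
    intro y
    have := congrArg (fun (A : Lam →L[ℂ] Lam) => A y) hX2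
    simpa using this
  -- the operator S = (I - X) T
  set S : U →L[ℂ] Lam := T - X.comp T with hS
  have hSapp : ∀ u, S u = T u - X (T u) := fun u => rfl
  have hSeq : (ContinuousLinearMap.id ℂ Lam - X).comp T = S := by
    ext u; simp [hSapp]
  have hA2' : LinearMap.range (R : Uhat →ₗ[ℂ] U) = LinearMap.ker (S : U →ₗ[ℂ] Lam) := by rw [hA2, hSeq]
  -- range S = ker (id + X)
  have hrange : LinearMap.range (S : U →ₗ[ℂ] Lam) = LinearMap.ker ((ContinuousLinearMap.id ℂ Lam + X : Lam →L[ℂ] Lam) : Lam →ₗ[ℂ] Lam) := by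
    apply le_antisymm
    · rintro y ⟨u, rfl⟩
      simp only [LinearMap.mem_ker, ContinuousLinearMap.coe_coe, ContinuousLinearMap.add_apply,
        ContinuousLinearMap.coe_id', id_eq, hSapp]
      rw [map_sub, hX2']
      abel
    · intro y hy
      have hy' : X y = -y := by
        have : y + X y = 0 := hy
        linear_combination (norm := abel) this
      obtain ⟨u, hu⟩ : ∃ u, T u = y := by
        have : y ∈ LinearMap.range (T : U →ₗ[ℂ] Lam) := hTsurj ▸ Submodule.mem_top
        exact this
      refine ⟨(1/2 : ℂ) • u, ?_⟩
      show S ((1/2 : ℂ) • u) = y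
      rw [map_smul, hSapp, hu, hy']
      rw [sub_neg_eq_add]
      rw [smul_add, ← add_smul]
      norm_num
  -- first part: closedness
  have hclosed : IsClosed (Set.range fun u : U => T u - X (T u)) := by
    have : (Set.range fun u : U => T u - X (T u)) =
        (LinearMap.ker ((ContinuousLinearMap.id ℂ Lam + X : Lam →L[ℂ] Lam) : Lam →ₗ[ℂ] Lam) : Set Lam) := by
      ext y
      constructor
      · rintro ⟨u, rfl⟩
        have : S u ∈ LinearMap.range (S : U →ₗ[ℂ] Lam) := LinearMap.mem_range_self _ u
        rw [hrange] at this
        exact this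
      · intro hy
        have : y ∈ LinearMap.range (S : U →ₗ[ℂ] Lam) := by rw [hrange]; exact hy
        obtain ⟨u, hu⟩ := this
        exact ⟨u, hu⟩
    rw [this]
    exact ContinuousLinearMap.isClosed_ker _
  refine ⟨hclosed, ?_⟩
  -- second part
  ext f
  simp only [SetLike.mem_coe, LinearMap.mem_ker, Set.mem_image, Set.mem_setOf_eq]
  constructor
  · -- hard direction
    intro hf
    have hfR : ∀ w : Uhat, f (R w) = 0 := by
      intro w
      have := congrArg (fun (g : Uhat →L[ℂ] ℂ) => g w) hf
      simpa [trOp_apply] using this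
    -- f vanishes on ker S
    have hfker : ∀ u : U, S u = 0 → f u = 0 := by
      intro u hu
      have : u ∈ LinearMap.range (R : Uhat →ₗ[ℂ] U) := by
        rw [hA2']; exact hu
      obtain ⟨w, rfl⟩ := this
      exact hfR w
    -- set up the closed subspaces
    set M : Submodule ℂ Lam := LinearMap.ker ((ContinuousLinearMap.id ℂ Lam + X : Lam →L[ℂ] Lam) : Lam →ₗ[ℂ] Lam) with hM
    set K : Submodule ℂ U := LinearMap.ker (S : U →ₗ[ℂ] Lam) with hK
    have hMclosed : IsClosed (M : Set Lam) := ContinuousLinearMap.isClosed_ker _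
    have hKclosed : IsClosed (K : Set U) := ContinuousLinearMap.isClosed_ker _
    haveI : CompleteSpace M := hMclosed.completeSpace_coe
    haveI : CompleteSpace K := hKclosed.completeSpace_coe
    set N : Submodule ℂ U := Kᗮ with hN
    haveI : CompleteSpace N := (Submodule.isClosed_orthogonal K).completeSpace_coe
    -- the restricted operator S' : N → M
    have hmemM : ∀ n : N, S (n : U) ∈ M := by
      intro n
      have : S (n : U) ∈ LinearMap.range (S : U →ₗ[ℂ] Lam) := LinearMap.mem_range_self _ _
      rwa [hrange] at this
    set S' : N →L[ℂ] M :=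
      ContinuousLinearMap.codRestrict (S.comp N.subtypeL) M hmemM with hS'
    have hS'app : ∀ n : N, (S' n : Lam) = S (n : U) := fun n => rfl
    -- S' is injective
    have hS'inj : LinearMap.ker (S' : N →ₗ[ℂ] M) = ⊥ := by
      rw [LinearMap.ker_eq_bot']
      intro n hn
      have h1 : S (n : U) = 0 := by
        have := congrArg (Subtype.val) hn
        simpa [hS'app] using this
      have h2 : (n : U) ∈ K := h1
      have h3 : (n : U) ∈ Kᗮ := n.2
      have : (n : U) = 0 := by
        have := h3 (n : U) h2
        rwa [inner_self_eq_zero] at this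
      exact Subtype.ext this
    -- S' is surjective
    have hS'surj : LinearMap.range (S' : N →ₗ[ℂ] M) = ⊤ := by
      rw [LinearMap.range_eq_top]
      rintro ⟨m, hm⟩
      have : m ∈ LinearMap.range (S : U →ₗ[ℂ] Lam) := by rw [hrange]; exact hm
      obtain ⟨u, hu⟩ := this
      obtain ⟨y, hy, z, hz, hyz⟩ := K.exists_add_mem_mem_orthogonal u
      refine ⟨⟨z, hz⟩, ?_⟩
      apply Subtype.ext
      show S z = m
      have hSy : S y = 0 := hy
      have : S u = S y + S z := by rw [← map_add, ← hyz]
      rw [show S u = m from hu] at this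
      rw [hSy, zero_add] at this
      exact this.symm
    set e := ContinuousLinearEquiv.ofBijective S' hS'inj hS'surj with he
    -- the functional τ' on Lam with τ' ∘ S = f
    set τ' : Lam →L[ℂ] ℂ :=
      ((f.comp N.subtypeL).comp (e.symm : M →L[ℂ] N)).comp
        (Submodule.orthogonalProjectionOnto M : Lam →L[ℂ] M) with hτ'
    have hτ'S : ∀ u : U, τ' (S u) = f u := by
      intro u
      have hSuM : S u ∈ M := by
        have : S u ∈ LinearMap.range (S : U →ₗ[ℂ] Lam) := LinearMap.mem_range_self _ _
        rwa [hrange] at this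
      have hproj : Submodule.orthogonalProjectionOnto M (S u) = ⟨S u, hSuM⟩ :=
        Submodule.orthogonalProjectionOnto_mem_subspace_eq_self ⟨S u, hSuM⟩
      set n : N := e.symm ⟨S u, hSuM⟩ with hn
      have hen : S' n = ⟨S u, hSuM⟩ := e.apply_symm_apply _
      have hSn : S (n : U) = S u := by
        have := congrArg Subtype.val hen
        simpa [hS'app] using this
      have hτ'val : τ' (S u) = f (n : U) := by
        show f ((e.symm ((Submodule.orthogonalProjectionOnto M) (S u)) : N) : U) = f (n : U)
        rw [hproj]
      rw [hτ'val]
      have : f ((n : U) - u) = 0 := by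
        apply hfker
        rw [map_sub, hSn, sub_self]
      have := sub_eq_zero.mp (by rwa [map_sub] at this)
      exact this
    -- the desired τ
    refine ⟨τ'.comp (ContinuousLinearMap.id ℂ Lam - X), ?_, ?_⟩
    · ext y
      simp only [ContinuousLinearMap.add_apply, ContinuousLinearMap.comp_apply,
        ContinuousLinearMap.sub_apply, ContinuousLinearMap.coe_id', id_eq,
        ContinuousLinearMap.zero_apply, trOp_apply]
      rw [← map_add]
      have : (y - X y) + (X y - X (X y)) = 0 := by
        rw [hX2']; abel
      rw [this, map_zero]
    · ext u
      simp only [trOp_apply, ContinuousLinearMap.comp_apply, ContinuousLinearMap.sub_apply,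
        ContinuousLinearMap.coe_id', id_eq]
      exact hτ'S u
  · -- easy direction
    rintro ⟨τ, hτ, rfl⟩
    ext w
    simp only [trOp_apply, ContinuousLinearMap.zero_apply]
    have hRw : R w ∈ LinearMap.ker (S : U →ₗ[ℂ] Lam) := by rw [← hA2']; exact LinearMap.mem_range_self _ w
    have hfix : X (T (R w)) = T (R w) := by
      have : S (R w) = 0 := hRw
      rw [hSapp] at this
      exact (sub_eq_zero.mp this).symm
    have hτX : ∀ y, τ y + τ (X y) = 0 := by
      intro y
      have := congrArg (fun (g : Lam →L[ℂ] ℂ) => g y) hτ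
      simpa [trOp_apply] using this
    have h2 : τ (T (R w)) + τ (T (R w)) = 0 := by
      have := hτX (T (R w))
      rwa [hfix] at this
    have : (2 : ℂ) * τ (T (R w)) = 0 := by linear_combination h2
    have h3 := mul_eq_zero.mp this
    rcases h3 with h | h
    · norm_num at h
    · exact h
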